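/- Let d ≥ 2 and let p_1, …, p_d ∈ ℝ^d satisfy Σ_{i=1}^d |p_i| = d. Then Σ_{1 ≤ i < j ≤ d} √( |p_i|²·|p_j|² − ⟨p_i, p_j⟩² ) ≤ binom(d, 2), with equality if and only if p_1, …, p_d form an orthonormal system. -/

import Mathlib

open Finset

/-- Let `d ≥ 2` and `p₁, …, p_d ∈ ℝ^d` with `∑ᵢ ‖pᵢ‖ = d` (so the
parallelotope `∑ᵢ [0, pᵢ]` has the mean width of the unit cube). Then its second intrinsic
volume satisfies `∑_{i<j} √(‖pᵢ‖²‖pⱼ‖² - ⟨pᵢ, pⱼ⟩²) ≤ C(d,2)`, with equality if and only if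
`p₁, …, p_d` is an orthonormal system. -/
theorem parallelotope_V2_le_of_mean_width_eq (d : ℕ) (hd : 2 ≤ d)
    (p : Fin d → EuclideanSpace ℝ (Fin d)) (hw : ∑ i, ‖p i‖ = (d : ℝ)) :
    (∑ i, ∑ j ∈ Finset.Ioi i,
        Real.sqrt (‖p i‖ ^ 2 * ‖p j‖ ^ 2 - (inner ℝ (p i) (p j) : ℝ) ^ 2)) ≤
      (d.choose 2 : ℝ) ∧
    ((∑ i, ∑ j ∈ Finset.Ioi i,
        Real.sqrt (‖p i‖ ^ 2 * ‖p j‖ ^ 2 - (inner ℝ (p i) (p j) : ℝ) ^ 2)) =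
        (d.choose 2 : ℝ) ↔ Orthonormal ℝ p) := by
  have ha : ∀ i, (0:ℝ) ≤ ‖p i‖ := fun i => norm_nonneg _
  set a : Fin d → ℝ := fun i => ‖p i‖ with ha_def
  -- Identity: 2 * ∑_{i<j} aᵢ aⱼ = (∑ a)² - ∑ a²
  have hid : 2 * (∑ i, ∑ j ∈ Ioi i, a i * a j) = (∑ i, a i) ^ 2 - ∑ i, a i ^ 2 := by
    have h1 := Finset.sum_sum_Ioi_add_eq_sum_sum_off_diag (fun i j : Fin d => a i * a j)
    simp only [Finset.compl_singleton] at h1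
    calc 2 * (∑ i, ∑ j ∈ Ioi i, a i * a j)
        = ∑ i, ∑ j ∈ Ioi i, (a j * a i + a i * a j) := by
          rw [Finset.mul_sum]
          refine Finset.sum_congr rfl fun i _ => ?_
          rw [Finset.mul_sum]
          exact Finset.sum_congr rfl fun j _ => by ring
      _ = ∑ i, ((∑ j, a j) * a i - a i * a i) := by
          rw [h1]
          refine Finset.sum_congr rfl fun i _ => ?_
          rw [eq_sub_iff_add_eq, Finset.sum_mul]
          convert Finset.sum_erase_add univ (fun j => a j * a i) (Finset.mem_univ i) using 3
      _ = (∑ i, a i) ^ 2 - ∑ i, a i ^ 2 := by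
          rw [Finset.sum_sub_distrib, ← Finset.mul_sum]
          simp only [pow_two]
  -- Expansion of ∑ (aᵢ - 1)²
  have hexp : ∑ i, (a i - 1) ^ 2 = (∑ i, a i ^ 2) - 2 * (∑ i, a i) + d := by
    have : ∀ i : Fin d, (a i - 1) ^ 2 = a i ^ 2 - 2 * a i + 1 := fun i => by ring
    rw [Finset.sum_congr rfl fun i _ => this i, Finset.sum_add_distrib,
      Finset.sum_sub_distrib, ← Finset.mul_sum, Finset.sum_const, Finset.card_univ,
      Fintype.card_fin]
    simp
  have hsumsq : (d : ℝ) ≤ ∑ i, a i ^ 2 := by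
    have h0 : (0:ℝ) ≤ ∑ i, (a i - 1) ^ 2 := Finset.sum_nonneg fun i _ => sq_nonneg _
    rw [hexp, hw] at h0
    linarith
  have hchoose : (d.choose 2 : ℝ) = d * ((d:ℝ) - 1) / 2 := Nat.cast_choose_two (K := ℝ) d
  -- T := ∑_{i<j} aᵢ aⱼ ≤ choose d 2
  have hT : (∑ i, ∑ j ∈ Ioi i, a i * a j) ≤ (d.choose 2 : ℝ) := by
    rw [hw] at hid
    rw [hchoose]
    nlinarith [hid, hsumsq]
  -- termwise bound
  have hterm : ∀ i j : Fin d,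
      Real.sqrt (‖p i‖ ^ 2 * ‖p j‖ ^ 2 - (inner ℝ (p i) (p j) : ℝ) ^ 2) ≤ a i * a j := by
    intro i j
    have h1 : ‖p i‖ ^ 2 * ‖p j‖ ^ 2 - (inner ℝ (p i) (p j) : ℝ) ^ 2 ≤ (a i * a j) ^ 2 := by
      have := sq_nonneg (inner ℝ (p i) (p j) : ℝ)
      simp only [ha_def]
      nlinarith
    calc Real.sqrt (‖p i‖ ^ 2 * ‖p j‖ ^ 2 - (inner ℝ (p i) (p j) : ℝ) ^ 2)
        ≤ Real.sqrt ((a i * a j) ^ 2) := Real.sqrt_le_sqrt h1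
      _ = a i * a j := Real.sqrt_sq (mul_nonneg (ha i) (ha j))
  have hS_le_T : (∑ i, ∑ j ∈ Ioi i,
      Real.sqrt (‖p i‖ ^ 2 * ‖p j‖ ^ 2 - (inner ℝ (p i) (p j) : ℝ) ^ 2))
      ≤ ∑ i, ∑ j ∈ Ioi i, a i * a j :=
    Finset.sum_le_sum fun i _ => Finset.sum_le_sum fun j _ => hterm i j
  refine ⟨hS_le_T.trans hT, ?_, ?_⟩
  · -- equality → orthonormal
    intro hS
    have hTeq : (∑ i, ∑ j ∈ Ioi i, a i * a j) = (d.choose 2 : ℝ) :=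
      le_antisymm hT (hS ▸ hS_le_T)
    have hsq : ∑ i, a i ^ 2 = (d : ℝ) := by
      rw [hw, hTeq, hchoose] at hid
      nlinarith [hid]
    have hz : ∑ i, (a i - 1) ^ 2 = 0 := by rw [hexp, hw, hsq]; ring
    have hA1 : ∀ i, a i = 1 := by
      intro i
      have h0 := (Finset.sum_eq_zero_iff_of_nonneg (fun i _ => sq_nonneg (a i - 1))).mp hz
        i (Finset.mem_univ i)
      have h1 : a i - 1 = 0 := (pow_eq_zero_iff two_ne_zero).mp h0
      linarith
    have hSeqT : (∑ i, ∑ j ∈ Ioi i,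
        Real.sqrt (‖p i‖ ^ 2 * ‖p j‖ ^ 2 - (inner ℝ (p i) (p j) : ℝ) ^ 2))
        = ∑ i, ∑ j ∈ Ioi i, a i * a j := hS.trans hTeq.symm
    have hinner0 : ∀ i j : Fin d, i < j → (inner ℝ (p i) (p j) : ℝ) = 0 := by
      intro i j hij
      have houter := (Finset.sum_eq_sum_iff_of_le
        (fun i _ => Finset.sum_le_sum fun j _ => hterm i j)).mp hSeqT i (Finset.mem_univ i)
      have hpair := (Finset.sum_eq_sum_iff_of_le (fun j _ => hterm i j)).mp houter j
        (Finset.mem_Ioi.mpr hij)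
      have e1 : ‖p i‖ = 1 := hA1 i
      have e2 : ‖p j‖ = 1 := hA1 j
      rw [e1, e2, hA1 i, hA1 j] at hpair
      norm_num at hpair
      simpa [PiLp.inner_apply, RCLike.inner_apply, conj_trivial] using hpair
    refine ⟨fun i => hA1 i, fun i j hij => ?_⟩
    rcases lt_or_gt_of_ne hij with h | h
    · exact hinner0 i j h
    · rw [real_inner_comm]; exact hinner0 j i h
  · -- orthonormal → equality
    intro hon
    have hA1 : ∀ i, a i = 1 := hon.1
    have hS1 : (∑ i, ∑ j ∈ Ioi i,
        Real.sqrt (‖p i‖ ^ 2 * ‖p j‖ ^ 2 - (inner ℝ (p i) (p j) : ℝ) ^ 2))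
        = ∑ i, ∑ j ∈ Ioi i, a i * a j := by
      refine Finset.sum_congr rfl fun i _ => Finset.sum_congr rfl fun j hj => ?_
      have hij : i ≠ j := ne_of_lt (Finset.mem_Ioi.mp hj)
      have e1 : ‖p i‖ = 1 := hA1 i
      have e2 : ‖p j‖ = 1 := hA1 j
      rw [hon.2 hij, e1, e2, hA1 i, hA1 j]
      norm_num
    have hsq : ∑ i, a i ^ 2 = (d : ℝ) := by
      simp [hA1]
    rw [hS1]
    rw [hw, hsq] at hid
    rw [hchoose]
    nlinarith [hid]
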